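/- Let d ≥ 1 and let v_0, v_1, …, v_d be distinct nonzero vectors in ℤ^d with v_1, …, v_d linearly independent over ℚ. Let h ∈ ℕ and let I be a nonempty finite set of natural numbers with I ⊆ {0, …, h} such that all elements of I are congruent to one another modulo N. Then ⋂_{j∈I} A_{j,h} = A_{min I, h} ∩ A_{max I, h}. -/

import Mathlib

open Pointwise

/-- The truncated cone `C_k = {n₁v₁ + ⋯ + n_d v_d : nᵢ ∈ ℕ, n₁ + ⋯ + n_d ≤ k}`. -/
def truncCone {d : ℕ} (v : Fin d → Fin d → ℤ) (k : ℕ) : Set (Fin d → ℤ) :=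
  {x | ∃ n : Fin d → ℕ, (∑ i, n i) ≤ k ∧ x = ∑ i, (n i) • v i}

/-- The translated truncated cone `A_{j,h} = j·v₀ + C_{h-j}` (empty if `j > h`). -/
def truncA {d : ℕ} (v0 : Fin d → ℤ) (v : Fin d → Fin d → ℤ) (j h : ℕ) :
    Set (Fin d → ℤ) :=
  if j ≤ h then (fun x => j • v0 + x) '' truncCone v (h - j) else ∅

theorem multiple_intersection_of_truncated_cones (d : ℕ) (hd : 1 ≤ d)
    (v0 : Fin d → ℤ) (v : Fin d → Fin d → ℤ)
    (hdist : Function.Injective (Fin.cons v0 v : Fin (d + 1) → Fin d → ℤ))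
    (hnz : ∀ i : Fin (d + 1), (Fin.cons v0 v : Fin (d + 1) → Fin d → ℤ) i ≠ 0)
    (hli : LinearIndependent ℚ (fun i (j : Fin d) => (v i j : ℚ)))
    (N : ℕ)
    (hN : IsLeast {n : ℕ | 0 < n ∧ (n • v0) ∈ Submodule.span ℤ (Set.range v)} N)
    (h : ℕ) (I : Finset ℕ) (hne : I.Nonempty) (hIh : ∀ j ∈ I, j ≤ h)
    (hcong : ∀ j ∈ I, ∀ j' ∈ I, j ≡ j' [MOD N]) :
    (⋂ j ∈ I, truncA v0 v j h) =
      truncA v0 v (I.min' hne) h ∩ truncA v0 v (I.max' hne) h := by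
  -- Linear independence of `v` over ℤ
  have hliZ : LinearIndependent ℤ v := by
    let f : (Fin d → ℤ) →ₗ[ℤ] (Fin d → ℚ) :=
      { toFun := fun x j => (x j : ℚ)
        map_add' := by intros; funext; push_cast; simp
        map_smul' := by intros; funext; push_cast; simp }
    have h1 : LinearIndependent ℤ (fun i (j : Fin d) => (v i j : ℚ)) :=
      hli.restrict_scalars (by intro a b hab; simpa using hab)
    exact LinearIndependent.of_comp f (by convert h1 using 1; exact rfl)
  -- Uniqueness of coefficients
  have huniq : ∀ a b : Fin d → ℤ, ∑ i, a i • v i = ∑ i, b i • v i → a = b := by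
    intro a b hab
    have hz : ∑ i, (a i - b i) • v i = 0 := by
      simp only [sub_smul, Finset.sum_sub_distrib, hab, sub_self]
    have h2 := Fintype.linearIndependent_iff.mp hliZ (fun i => a i - b i) hz
    funext i
    have h3 : a i - b i = 0 := h2 i
    omega
  -- Extract the relation `N • v0 = ∑ w i • v i`
  obtain ⟨w, hw⟩ : ∃ w : Fin d → ℤ, (N : ℤ) • v0 = ∑ i, w i • v i := by
    have hs := hN.1.2
    rw [Submodule.mem_span_range_iff_exists_fun] at hs
    obtain ⟨w, hw⟩ := hs
    exact ⟨w, by rw [hw]; simp⟩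
  set m := I.min' hne with hm_def
  set M := I.max' hne with hM_def
  have hmI : m ∈ I := I.min'_mem hne
  have hMI : M ∈ I := I.max'_mem hne
  apply Set.Subset.antisymm
  · intro x hx
    rw [Set.mem_iInter₂] at hx
    exact ⟨hx m hmI, hx M hMI⟩
  · rintro x ⟨hxm, hxM⟩
    refine Set.mem_iInter₂.mpr fun j hj => ?_
    have hjh : j ≤ h := hIh j hj
    have hmj : m ≤ j := I.min'_le j hj
    have hjM : j ≤ M := I.le_max' j hj
    have hmh : m ≤ h := hIh m hmI
    have hMh : M ≤ h := hIh M hMI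
    -- unfold the two memberships
    rw [truncA, if_pos hmh] at hxm
    obtain ⟨y, ⟨a, ha, hay⟩, hxy⟩ := hxm
    rw [truncA, if_pos hMh] at hxM
    obtain ⟨y', ⟨b, hb, hby⟩, hxy'⟩ := hxM
    have hxa : x = (m : ℤ) • v0 + ∑ i, (a i : ℤ) • v i := by
      rw [← hxy, hay]; simp [natCast_zsmul]
    have hxb : x = (M : ℤ) • v0 + ∑ i, (b i : ℤ) • v i := by
      rw [← hxy', hby]; simp [natCast_zsmul]
    -- congruence facts
    obtain ⟨t, ht⟩ := (Nat.modEq_iff_dvd' hmj).mp (hcong m hmI j hj)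
    obtain ⟨s', hs'⟩ := (Nat.modEq_iff_dvd' hjM).mp (hcong j hj M hMI)
    set s := t + s' with hs_def
    have hNadd : N * s = N * t + N * s' := by rw [hs_def, Nat.mul_add]
    have hMm : M - m = N * s := by omega
    have hj_eq : j = m + N * t := by omega
    have hM_eq : M = m + N * s := by omega
    have hts : (t : ℤ) ≤ s := by exact_mod_cast Nat.le_add_right t s'
    -- key coefficient identity
    have key : (fun i => (a i : ℤ) - b i) = fun i => (s : ℤ) * w i := by
      apply huniq
      have eq0 : (m : ℤ) • v0 + ∑ i, (a i : ℤ) • v i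
          = (M : ℤ) • v0 + ∑ i, (b i : ℤ) • v i := hxa.symm.trans hxb
      have eq' : ∑ i, (a i : ℤ) • v i
          = (M : ℤ) • v0 + ∑ i, (b i : ℤ) • v i - (m : ℤ) • v0 := by
        rw [← eq0]; abel
      have e1 : ((M : ℤ) - m) • v0 = ∑ i, ((a i : ℤ) - b i) • v i := by
        simp only [sub_smul, Finset.sum_sub_distrib, eq']; abel
      have e2 : ((M : ℤ) - m) • v0 = ∑ i, ((s : ℤ) * w i) • v i := by
        have hMmZ : (M : ℤ) - m = (N : ℤ) * s := by
          have : (M : ℤ) = m + N * s := by exact_mod_cast hM_eq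
          linarith
        rw [hMmZ, mul_comm, mul_smul, hw, Finset.smul_sum]
        simp only [smul_smul]
      rw [← e1, e2]
    have hab : ∀ i, (a i : ℤ) - b i = s * w i := fun i => congrFun key i
    -- nonnegativity of new coefficients
    have hc : ∀ i, 0 ≤ (a i : ℤ) - t * w i := by
      intro i
      have h1 := hab i
      have hb0 : (0 : ℤ) ≤ b i := Int.natCast_nonneg _
      have ha0 : (0 : ℤ) ≤ a i := Int.natCast_nonneg _
      have ht0 : (0 : ℤ) ≤ t := Int.natCast_nonneg _
      rcases le_or_gt 0 (w i) with hwi | hwi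
      · have h4 : (t : ℤ) * w i ≤ (s : ℤ) * w i :=
          mul_le_mul_of_nonneg_right hts hwi
        linarith
      · have h4 : (t : ℤ) * w i ≤ 0 :=
          mul_nonpos_of_nonneg_of_nonpos ht0 hwi.le
        linarith
    set n : Fin d → ℕ := fun i => ((a i : ℤ) - t * w i).toNat with hn_def
    have hni : ∀ i, (n i : ℤ) = (a i : ℤ) - t * w i :=
      fun i => Int.toNat_of_nonneg (hc i)
    rw [truncA, if_pos hjh]
    refine ⟨∑ i, n i • v i, ⟨n, ?_, rfl⟩, ?_⟩
    · -- sum bound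
      set S : ℤ := ∑ i, w i with hS_def
      have hsum_n : (∑ i, (n i : ℤ)) = (∑ i, (a i : ℤ)) - t * S := by
        simp only [hni, Finset.sum_sub_distrib, Finset.mul_sum, hS_def]
      have hsum_ab : (∑ i, (a i : ℤ)) - ∑ i, (b i : ℤ) = s * S := by
        rw [← Finset.sum_sub_distrib]
        simp only [hab, Finset.mul_sum, hS_def]
      have hsuma : (∑ i, (a i : ℤ)) + m ≤ h := by
        have : (∑ i, a i) + m ≤ h := by omega
        exact_mod_cast this
      have hsumb : (∑ i, (b i : ℤ)) + M ≤ h := by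
        have : (∑ i, b i) + M ≤ h := by omega
        exact_mod_cast this
      have hjZ : (j : ℤ) = m + N * t := by exact_mod_cast hj_eq
      have hMZ : (M : ℤ) = m + N * s := by exact_mod_cast hM_eq
      have hfin : (∑ i, (n i : ℤ)) + (j : ℤ) ≤ h := by
        rcases le_or_gt (N : ℤ) S with hNS | hNS
        · have ht0 : (0 : ℤ) ≤ t := Int.natCast_nonneg _
          have h4 : (t : ℤ) * ((N : ℤ) - S) ≤ 0 :=
            mul_nonpos_of_nonneg_of_nonpos ht0 (by linarith)
          have h5 : (t : ℤ) * ((N : ℤ) - S) = t * N - t * S := by ring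
          linarith
        · have h3 : (t : ℤ) * ((N : ℤ) - S) ≤ (s : ℤ) * ((N : ℤ) - S) :=
            mul_le_mul_of_nonneg_right hts (by linarith)
          have h5 : (t : ℤ) * ((N : ℤ) - S) = t * N - t * S := by ring
          have h6 : (s : ℤ) * ((N : ℤ) - S) = s * N - s * S := by ring
          linarith
      have hcast : ((∑ i, n i : ℕ) : ℤ) + (j : ℤ) ≤ (h : ℤ) := by
        push_cast
        exact hfin
      omega
    · -- vector identity
      show j • v0 + ∑ i, n i • v i = x
      have hjc : (j : ℤ) = (m : ℤ) + (N : ℤ) * t := by exact_mod_cast hj_eq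
      have hNt : ((N : ℤ) * t) • v0 = ∑ i, ((t : ℤ) * w i) • v i := by
        rw [mul_comm, mul_smul, hw, Finset.smul_sum]
        simp only [smul_smul]
      have hz : (j : ℤ) • v0 + ∑ i, (n i : ℤ) • v i = x := by
        rw [hxa, hjc, add_smul, hNt]
        simp only [hni, sub_smul, Finset.sum_sub_distrib]
        abel
      simpa only [natCast_zsmul] using hz
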